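/- Let A ∈ M_n(ℂ) and z ∈ F_N(A). Then |z| = 1 if and only if z = λ/|λ| for some eigenvalue λ of A (with λ ≠ 0). -/

import Mathlib

open Matrix

noncomputable def fN {n : ℕ} (A : Matrix (Fin n) (Fin n) ℂ)
    (x : EuclideanSpace ℂ (Fin n)) : ℂ :=
  (inner ℂ x (Matrix.toEuclideanLin A x) : ℂ) /
    ((‖x‖ * ‖Matrix.toEuclideanLin A x‖ : ℝ) : ℂ)

noncomputable def FN {n : ℕ} (A : Matrix (Fin n) (Fin n) ℂ) : Set ℂ :=
  {z | ∃ x : EuclideanSpace ℂ (Fin n), Matrix.toEuclideanLin A x ≠ 0 ∧ z = fN A x}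

lemma spec_eq {n : ℕ} (A : Matrix (Fin n) (Fin n) ℂ) :
    spectrum ℂ (Matrix.toEuclideanLin A) = spectrum ℂ A :=
  AlgEquiv.spectrum_eq (Matrix.toLinAlgEquiv (PiLp.basisFun 2 ℂ (Fin n))) _

theorem stmt1 {n : ℕ} (A : Matrix (Fin n) (Fin n) ℂ) (z : ℂ) (hz : z ∈ FN A) :
    ‖z‖ = 1 ↔
      ∃ lam : ℂ, lam ∈ spectrum ℂ A ∧ lam ≠ 0 ∧ z = lam / ((‖lam‖ : ℝ) : ℂ) := by
  obtain ⟨x, hAx, hzx⟩ := hz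
  constructor
  · intro h1
    have hnorm : ‖(inner ℂ x (Matrix.toEuclideanLin A x) : ℂ) /
        ((‖x‖ : ℂ) * (‖Matrix.toEuclideanLin A x‖ : ℂ))‖ = 1 := by
      have : z = (inner ℂ x (Matrix.toEuclideanLin A x) : ℂ) /
          ((‖x‖ : ℂ) * (‖Matrix.toEuclideanLin A x‖ : ℂ)) := by
        rw [hzx, fN]; push_cast; ring_nf
      rw [← this]
      simpa using h1
    obtain ⟨hx0, r, hr0, hxr⟩ := (norm_inner_div_norm_mul_norm_eq_one_iff x
      (Matrix.toEuclideanLin A x)).1 hnorm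
    refine ⟨r, ?_, hr0, ?_⟩
    · rw [← spec_eq]
      exact Module.End.hasEigenvalue_iff_mem_spectrum.1
        (Module.End.hasEigenvalue_of_hasEigenvector ⟨Module.End.mem_eigenspace_iff.2 hxr, hx0⟩)
    · rw [hzx, fN, hxr]
      have hx0' : (‖x‖ : ℂ) ≠ 0 := by
        simpa using hx0
      have hr0' : ((‖r‖ : ℝ) : ℂ) ≠ 0 := by
        simpa using hr0
      rw [inner_smul_right, norm_smul, inner_self_eq_norm_sq_to_K]
      push_cast
      field_simp
      rfl
  · rintro ⟨lam, _, hlam, rfl⟩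
    rw [norm_div, Complex.norm_real, norm_norm,
      div_self (norm_ne_zero_iff.2 hlam)]
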